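/- arXiv:2201.03347 — 2 statements merged into one kernel-verified Lean document; each statement's English description precedes it below -/
import Mathlib

section
/- The positive lift map W → B_W is well defined: for any two reduced words s₁⋯s_k and t₁⋯t_k expressing the same element w ∈ W, the products σ_{s₁}⋯σ_{s_k} and σ_{t₁}⋯σ_{t_k} of the positive Artin generators are equal in the Artin–Tits (generalized braid) group B_W. -/
noncomputable section AuxMat
open Real Matrix

def mtRot (x : ℝ) : Matrix (Fin 2) (Fin 2) ℝ := !![Real.cos x, -Real.sin x; Real.sin x, Real.cos x]

lemma mtRot_mul (x y : ℝ) : mtRot x * mtRot y = mtRot (x + y) := by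
  simp only [mtRot]
  ext i j
  fin_cases i <;> fin_cases j <;>
    simp [Matrix.mul_apply, Fin.sum_univ_two, Real.cos_add, Real.sin_add] <;> ring

lemma mtRot_zero : mtRot 0 = 1 := by
  ext i j; fin_cases i <;> fin_cases j <;> simp [mtRot]

lemma mtRot_pow (x : ℝ) (p : ℕ) : (mtRot x) ^ p = mtRot (p * x) := by
  induction p with
  | zero => simp [mtRot_zero]
  | succ p ih =>
      rw [pow_succ, ih, mtRot_mul]
      congr 1
      push_cast
      ring

def mtN (g : ℝ) : Matrix (Fin 2) (Fin 2) ℝ := !![-1, -2*g; 2*g, 4*g^2-1]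

def mtQ (t : ℝ) : Matrix (Fin 2) (Fin 2) ℝ := !![Real.sin t, -Real.cos t; 0, 1]

lemma mtN_mul_mtQ (t : ℝ) : mtN (Real.cos t) * mtQ t = mtQ t * mtRot (2*t) := by
  have hs : Real.sin t ^ 2 = 1 - Real.cos t ^ 2 := Real.sin_sq t
  ext i j
  fin_cases i <;> fin_cases j
  · simp [mtN, mtQ, mtRot, Matrix.mul_apply, Fin.sum_univ_two, Real.cos_two_mul,
      Real.sin_two_mul]
    ring
  · simp [mtN, mtQ, mtRot, Matrix.mul_apply, Fin.sum_univ_two, Real.cos_two_mul,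
      Real.sin_two_mul]
    linear_combination (2*Real.cos t) * hs
  · simp [mtN, mtQ, mtRot, Matrix.mul_apply, Fin.sum_univ_two, Real.cos_two_mul,
      Real.sin_two_mul]
    ring
  · simp [mtN, mtQ, mtRot, Matrix.mul_apply, Fin.sum_univ_two, Real.cos_two_mul,
      Real.sin_two_mul]
    ring

lemma mtQ_det_ne (t : ℝ) (h : Real.sin t ≠ 0) : IsUnit (mtQ t).det := by
  simp [mtQ, Matrix.det_fin_two_of, h, isUnit_iff_ne_zero]

lemma mtN_pow_mtQ (t : ℝ) (p : ℕ) : (mtN (Real.cos t)) ^ p * mtQ t = mtQ t * mtRot (2*p*t) := by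
  induction p with
  | zero => simp [mtRot_zero]
  | succ p ih =>
      rw [pow_succ, mul_assoc, mtN_mul_mtQ, ← mul_assoc, ih, mul_assoc, mtRot_mul]
      congr 1
      push_cast
      ring

lemma sin_pi_div_ne {m : ℕ} (hm : 2 ≤ m) : Real.sin (Real.pi / m) ≠ 0 := by
  have h2m : (2:ℝ) ≤ m := by exact_mod_cast hm
  refine ne_of_gt (Real.sin_pos_of_pos_of_lt_pi ?_ ?_)
  · positivity
  · rw [div_lt_iff₀ (by positivity)]
    nlinarith [Real.pi_pos]

lemma mtN_pow_eq_one {m : ℕ} (hm : 2 ≤ m) : (mtN (Real.cos (Real.pi / m))) ^ m = 1 := by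
  have hm0 : (m : ℝ) ≠ 0 := by positivity
  have hs := sin_pi_div_ne hm
  have h := mtN_pow_mtQ (Real.pi / m) m
  have h2 : 2 * (m:ℝ) * (Real.pi / m) = 2 * Real.pi := by field_simp
  rw [h2] at h
  have hrot : mtRot (2 * Real.pi) = 1 := by
    ext i j; fin_cases i <;> fin_cases j <;> simp [mtRot, Real.cos_two_pi, Real.sin_two_pi]
  rw [hrot, mul_one] at h
  calc (mtN (Real.cos (Real.pi / m))) ^ m
      = (mtN (Real.cos (Real.pi / m))) ^ m * (mtQ _ * (mtQ _)⁻¹) := by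
        rw [Matrix.mul_nonsing_inv _ (mtQ_det_ne _ hs), mul_one]
    _ = 1 := by rw [← mul_assoc, h, Matrix.mul_nonsing_inv _ (mtQ_det_ne _ hs)]

lemma mtN_pow_ne_one {m q : ℕ} (hm : 2 ≤ m) (h0 : 0 < q) (hq : q < m) :
    (mtN (Real.cos (Real.pi / m))) ^ q ≠ 1 := by
  have hmpos : (0:ℝ) < m := by positivity
  have hs := sin_pi_div_ne hm
  intro hone
  have h := mtN_pow_mtQ (Real.pi / m) q
  rw [hone, one_mul] at h
  have hrot : mtRot (2*q*(Real.pi/m)) = 1 := by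
    calc mtRot (2*q*(Real.pi/m)) = (mtQ _)⁻¹ * (mtQ _ * mtRot (2*q*(Real.pi/m))) := by
          rw [← mul_assoc, Matrix.nonsing_inv_mul _ (mtQ_det_ne _ hs), one_mul]
      _ = 1 := by rw [← h, Matrix.nonsing_inv_mul _ (mtQ_det_ne _ hs)]
  have hcos : Real.cos (2*q*(Real.pi/m)) = 1 := by
    have := congrFun (congrFun hrot 0) 0
    simpa [mtRot] using this
  have hq0 : (0:ℝ) < q := by exact_mod_cast h0
  have hqm : (q:ℝ) < m := by exact_mod_cast hq
  have hx : 0 < 2*(q:ℝ)*(Real.pi/m) := by positivity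
  have hx2 : 2*(q:ℝ)*(Real.pi/m) < 2 * Real.pi := by
    have he : 2*(q:ℝ)*(Real.pi/m) = 2*Real.pi*q/m := by ring
    rw [he, div_lt_iff₀ hmpos]
    nlinarith [Real.pi_pos]
  have := (Real.cos_eq_one_iff_of_lt_of_lt (by linarith) hx2).mp hcos
  linarith

def mtK : Matrix (Fin 2) (Fin 2) ℝ := !![-2, -2; 2, 2]

lemma mtN_one_pow (q : ℕ) : (mtN 1) ^ q = 1 + (q:ℝ) • mtK := by
  induction q with
  | zero => simp
  | succ q ih =>
      rw [pow_succ, ih]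
      ext i j
      fin_cases i <;> fin_cases j <;>
        simp [mtN, mtK, Matrix.mul_apply, Fin.sum_univ_two, Matrix.one_apply] <;> push_cast <;> ring

end AuxMat
/- Part 2: geometric representation and order exactness -/
noncomputable section AuxGeom
open Real Matrix CoxeterSystem

variable {B : Type*} (M : CoxeterMatrix B)

/-- Entries of the bilinear form of the geometric representation. -/
def gc (k l : B) : ℝ := if M k l = 0 then -1 else -Real.cos (Real.pi / M k l)

lemma gc_symm (k l : B) : gc M k l = gc M l k := by unfold gc; rw [M.symmetric k l]

lemma gc_diag (k : B) : gc M k k = 1 := by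
  unfold gc
  rw [M.diagonal k]
  norm_num

/-- `⟪v, e k⟫` for the geometric bilinear form. -/
def gform (v : B →₀ ℝ) (k : B) : ℝ := Finsupp.linearCombination ℝ (fun l => gc M l k) v

lemma gform_add (v w : B →₀ ℝ) (k : B) : gform M (v + w) k = gform M v k + gform M w k :=
  map_add _ v w

lemma gform_smul (r : ℝ) (v : B →₀ ℝ) (k : B) : gform M (r • v) k = r * gform M v k :=
  map_smul (Finsupp.linearCombination ℝ (fun l => gc M l k)) r v

lemma gform_sub (v w : B →₀ ℝ) (k : B) : gform M (v - w) k = gform M v k - gform M w k :=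
  map_sub _ v w

lemma gform_single (l : B) (r : ℝ) (k : B) : gform M (Finsupp.single l r) k = r * gc M l k := by
  unfold gform
  rw [Finsupp.linearCombination_single]
  simp

/-- The geometric reflection associated to a generator. -/
def grefl (k : B) : Function.End (B →₀ ℝ) := fun v => v - (2 * gform M v k) • Finsupp.single k 1

lemma grefl_apply (k : B) (v : B →₀ ℝ) :
    grefl M k v = v - (2 * gform M v k) • Finsupp.single k 1 := rfl

lemma gform_grefl (k : B) (v : B →₀ ℝ) (k' : B) :
    gform M (grefl M k v) k' = gform M v k' - 2 * gform M v k * gc M k k' := by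
  rw [grefl_apply, gform_sub, gform_smul, gform_single]
  ring

lemma grefl_invol (k : B) (v : B →₀ ℝ) : grefl M k (grefl M k v) = v := by
  rw [grefl_apply (v := grefl M k v), gform_grefl, gc_diag, grefl_apply]
  module

section Pair

variable (k l : B)

/-- The product of the two geometric reflections. -/
abbrev gT : Function.End (B →₀ ℝ) := grefl M k * grefl M l

lemma gT_apply (v : B →₀ ℝ) :
    gT M k l v = v - (2 * (gform M v k + 2 * (-gc M k l) * gform M v l)) • Finsupp.single k 1
      - (2 * gform M v l) • Finsupp.single l 1 := by
  show grefl M k (grefl M l v) = _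
  rw [grefl_apply (v := grefl M l v), gform_grefl, gc_symm M l k, grefl_apply]
  module

/-- evolution of the pair of form values -/
lemma gT_pow_form (v : B →₀ ℝ) (p : ℕ) :
    gform M ((gT M k l ^ p) v) k
        = ((mtN (-gc M k l) ^ p) *ᵥ ![gform M v k, gform M v l]) 0 ∧
      gform M ((gT M k l ^ p) v) l
        = ((mtN (-gc M k l) ^ p) *ᵥ ![gform M v k, gform M v l]) 1 := by
  induction p with
  | zero =>
      simp [Matrix.mulVec, dotProduct, Fin.sum_univ_two, Function.End.one_def]
  | succ p ih =>
      obtain ⟨ih1, ih2⟩ := ih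
      have happ : (gT M k l ^ (p+1)) v = gT M k l ((gT M k l ^ p) v) := by
        rw [pow_succ']; rfl
      constructor
      · rw [happ, gT_apply, gform_sub, gform_sub, gform_smul, gform_smul, gform_single,
          gform_single, gc_diag, gc_symm M l k, ih1, ih2, pow_succ', ← Matrix.mulVec_mulVec]
        simp [Matrix.mulVec, dotProduct, Fin.sum_univ_two, mtN]
        ring
      · rw [happ, gT_apply, gform_sub, gform_sub, gform_smul, gform_smul, gform_single,
          gform_single, gc_diag, ih1, ih2, pow_succ', ← Matrix.mulVec_mulVec]
        simp [Matrix.mulVec, dotProduct, Fin.sum_univ_two, mtN]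
        ring

/-- the accumulated displacement -/
lemma gT_pow_apply (v : B →₀ ℝ) (P : ℕ) :
    (gT M k l ^ P) v = v
      + (-2 * (∑ p ∈ Finset.range P,
          (((mtN (-gc M k l) ^ p) *ᵥ ![gform M v k, gform M v l]) 0
            + 2 * (-gc M k l) * ((mtN (-gc M k l) ^ p) *ᵥ ![gform M v k, gform M v l]) 1)))
          • Finsupp.single k 1
      + (-2 * (∑ p ∈ Finset.range P,
          ((mtN (-gc M k l) ^ p) *ᵥ ![gform M v k, gform M v l]) 1)) • Finsupp.single l 1 := by
  induction P with
  | zero => simp [Function.End.one_def]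
  | succ P ih =>
      have happ : (gT M k l ^ (P+1)) v = gT M k l ((gT M k l ^ P) v) := by
        rw [pow_succ']; rfl
      rw [happ, gT_apply, (gT_pow_form M k l v P).1, (gT_pow_form M k l v P).2, ih,
        Finset.sum_range_succ, Finset.sum_range_succ]
      module

end Pair

lemma grefl_liftable : M.IsLiftable (grefl M) := by
  intro k l
  rcases eq_or_ne k l with rfl | hkl
  · rw [M.diagonal k, pow_one]
    funext v
    exact grefl_invol M k v
  rcases Nat.eq_zero_or_pos (M k l) with h0 | hpos
  · rw [h0, pow_zero]
  have hm2 : 2 ≤ M k l := by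
    have := M.off_diagonal k l hkl
    omega
  have hγ : -gc M k l = Real.cos (Real.pi / M k l) := by
    unfold gc
    rw [if_neg (by omega)]
    ring
  have hNm : (mtN (-gc M k l)) ^ (M k l) = 1 := by rw [hγ]; exact mtN_pow_eq_one hm2
  have hsin := sin_pi_div_ne (m := M k l) hm2
  have hdet : IsUnit (mtN (-gc M k l) - 1).det := by
    rw [isUnit_iff_ne_zero]
    have hd : (mtN (-gc M k l) - 1).det = 4 - 4 * (-gc M k l)^2 := by
      simp [mtN, Matrix.det_fin_two, Matrix.one_apply]
      ring
    rw [hd, hγ]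
    have h4 : 4 - 4 * Real.cos (Real.pi / M k l) ^ 2 = 4 * Real.sin (Real.pi / M k l) ^ 2 := by
      rw [Real.sin_sq]; ring
    rw [h4]
    positivity
  have hS : (∑ p ∈ Finset.range (M k l), (mtN (-gc M k l)) ^ p) = 0 := by
    have hgs := geom_sum_mul (mtN (-gc M k l)) (M k l)
    rw [hNm, sub_self] at hgs
    calc (∑ p ∈ Finset.range (M k l), (mtN (-gc M k l)) ^ p)
        = (∑ p ∈ Finset.range (M k l), (mtN (-gc M k l)) ^ p) *
            ((mtN (-gc M k l) - 1) * (mtN (-gc M k l) - 1)⁻¹) := by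
          rw [Matrix.mul_nonsing_inv _ hdet, mul_one]
      _ = 0 := by rw [← mul_assoc, hgs, zero_mul]
  funext v
  have hsum : ∀ (idx : Fin 2), (∑ p ∈ Finset.range (M k l),
      ((mtN (-gc M k l) ^ p) *ᵥ ![gform M v k, gform M v l]) idx) = 0 := by
    intro idx
    have hv : (∑ p ∈ Finset.range (M k l),
        ((mtN (-gc M k l) ^ p) *ᵥ ![gform M v k, gform M v l])) =
        (∑ p ∈ Finset.range (M k l), (mtN (-gc M k l)) ^ p) *ᵥ ![gform M v k, gform M v l] := by
      induction (M k l) with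
      | zero => simp
      | succ n ihn => rw [Finset.sum_range_succ, Finset.sum_range_succ, ihn, Matrix.add_mulVec]
    calc (∑ p ∈ Finset.range (M k l),
          ((mtN (-gc M k l) ^ p) *ᵥ ![gform M v k, gform M v l]) idx)
        = ((∑ p ∈ Finset.range (M k l),
            ((mtN (-gc M k l) ^ p) *ᵥ ![gform M v k, gform M v l]))) idx := by
          rw [Finset.sum_apply]
      _ = 0 := by rw [hv, hS]; simp
  have h1 : (∑ p ∈ Finset.range (M k l),
      (((mtN (-gc M k l) ^ p) *ᵥ ![gform M v k, gform M v l]) 0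
        + 2 * (-gc M k l) * ((mtN (-gc M k l) ^ p) *ᵥ ![gform M v k, gform M v l]) 1)) = 0 := by
    rw [Finset.sum_add_distrib, hsum 0, ← Finset.mul_sum, hsum 1]
    ring
  show (gT M k l ^ (M k l)) v = v
  rw [gT_pow_apply M k l v (M k l), h1, hsum 1]
  simp

/-- Order exactness: in a Coxeter group, low powers of a product of two distinct simple
reflections are nontrivial. -/
theorem pow_simple_mul_simple_ne_one {W : Type*} [Group W] (cs : CoxeterSystem M W)
    {i j : B} (hij : i ≠ j) {q : ℕ} (h0 : 0 < q) (hq : M i j = 0 ∨ q < M i j) :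
    (cs.simple i * cs.simple j) ^ q ≠ 1 := by
  intro hone
  have hμ : ((grefl M i * grefl M j : Function.End (B →₀ ℝ))) ^ q = 1 := by
    have := congrArg (cs.lift ⟨grefl M, grefl_liftable M⟩) hone
    rw [map_pow, _root_.map_mul, _root_.map_one, lift_apply_simple, lift_apply_simple] at this
    exact this
  rcases hq with h0' | hlt
  · -- infinite case : gamma = 1
    have hg : -gc M i j = 1 := by unfold gc; rw [if_pos h0']; ring
    have happ := gT_pow_apply M i j (Finsupp.single j 1) q
    rw [hμ] at happ
    have hP0i : gform M (Finsupp.single j 1) i = -1 := by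
      rw [gform_single, gc_symm M j i]
      have h' : gc M i j = -1 := by linarith [hg]
      rw [h']; ring
    have hP0j : gform M (Finsupp.single j 1) j = 1 := by rw [gform_single, gc_diag]; ring
    rw [hP0i, hP0j, hg] at happ
    have hterm : ∀ p : ℕ, ((mtN 1 ^ p) *ᵥ ![(-1:ℝ), 1]) 1 = 1 := by
      intro p
      rw [mtN_one_pow]
      simp [mtK, Matrix.mulVec, dotProduct, Fin.sum_univ_two, Matrix.add_apply,
        Matrix.smul_apply, Matrix.one_apply]
    have hsum2 : (∑ p ∈ Finset.range q, ((mtN 1 ^ p) *ᵥ ![(-1:ℝ), 1]) 1) = q := by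
      rw [Finset.sum_congr rfl (fun p _ => hterm p)]
      simp
    rw [hsum2] at happ
    have hj := congrArg (fun f : B →₀ ℝ => f j) happ
    simp only [Function.End.one_def, id_eq, Finsupp.add_apply, Finsupp.smul_apply,
      Finsupp.single_eq_same, Finsupp.single_eq_of_ne' hij, smul_eq_mul, mul_zero, mul_one,
      add_zero] at hj
    have hq0 : (0:ℝ) < q := by exact_mod_cast h0
    nlinarith [hj]
  · -- finite case
    have hm2 : 2 ≤ M i j := by
      have := M.off_diagonal i j hij
      omega
    have hγ : -gc M i j = Real.cos (Real.pi / M i j) := by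
      unfold gc
      rw [if_neg (by omega)]
      ring
    -- pinned forms
    have hpin : ∀ v : B →₀ ℝ, (mtN (-gc M i j) ^ q) *ᵥ ![gform M v i, gform M v j]
        = ![gform M v i, gform M v j] := by
      intro v
      have h1 := (gT_pow_form M i j v q).1
      have h2 := (gT_pow_form M i j v q).2
      rw [hμ] at h1 h2
      funext idx
      fin_cases idx
      · simpa [Function.End.one_def] using h1.symm
      · simpa [Function.End.one_def] using h2.symm
    have hNq : (mtN (-gc M i j)) ^ q = 1 := by
      have hvi := hpin (Finsupp.single i 1)
      have hvj := hpin (Finsupp.single j 1)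
      have hfi : gform M (Finsupp.single i 1) i = 1 := by rw [gform_single, gc_diag]; ring
      have hfij : gform M (Finsupp.single i 1) j = gc M i j := by rw [gform_single]; ring
      have hfji : gform M (Finsupp.single j 1) i = gc M i j := by
        rw [gform_single, gc_symm M j i]; ring
      have hfj : gform M (Finsupp.single j 1) j = 1 := by rw [gform_single, gc_diag]; ring
      rw [hfi, hfij] at hvi
      rw [hfji, hfj] at hvj
      -- deduce N^q = 1 from fixing a basis
      have hγsq : gc M i j ^ 2 ≠ 1 := by
        have hsin := sin_pi_div_ne (m := M i j) hm2
        have : Real.sin (Real.pi / M i j) ^ 2 = 1 - gc M i j ^ 2 := by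
          rw [Real.sin_sq]
          have : gc M i j = -Real.cos (Real.pi / M i j) := by linarith [hγ]
          rw [this]; ring
        intro hsq
        rw [hsq, sub_self] at this
        exact hsin (pow_eq_zero_iff (n := 2) (by norm_num) |>.mp this)
      set A := (mtN (-gc M i j)) ^ q with hA
      have e1 := congrFun hvi 0
      have e2 := congrFun hvi 1
      have e3 := congrFun hvj 0
      have e4 := congrFun hvj 1
      simp only [Matrix.mulVec, dotProduct, Fin.sum_univ_two, Matrix.cons_val_zero,
        Matrix.cons_val_one, Matrix.head_cons] at e1 e2 e3 e4
      have hfac : 1 - gc M i j ^ 2 ≠ 0 := fun h => hγsq (by linarith)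
      have hA01 : A 0 1 = 0 := by
        have h' : A 0 1 * (1 - gc M i j ^ 2) = 0 := by linear_combination e3 - gc M i j * e1
        exact (mul_eq_zero.mp h').resolve_right hfac
      have hA10 : A 1 0 = 0 := by
        have h' : A 1 0 * (1 - gc M i j ^ 2) = 0 := by linear_combination e2 - gc M i j * e4
        exact (mul_eq_zero.mp h').resolve_right hfac
      have hA00 : A 0 0 = 1 := by linear_combination e1 - gc M i j * hA01
      have hA11 : A 1 1 = 1 := by linear_combination e4 - gc M i j * hA10
      ext a b
      fin_cases a <;> fin_cases b <;>
        simp [hA00, hA01, hA10, hA11, Matrix.one_apply]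
    exact mtN_pow_ne_one hm2 h0 hlt (hγ ▸ hNq)

end AuxGeom
/- Part 3: dihedral word combinatorics -/
section AuxDihedral

open List CoxeterSystem

variable {B : Type*} {W : Type*} [Group W] {M : CoxeterMatrix B} (cs : CoxeterSystem M W)

/-- Palindromic shift identity, valid in any monoid. -/
lemma mul_pal {G : Type*} [Monoid G] (a b : G) (k : ℕ) : (b*a)^k * b = b * (a*b)^k := by
  induction k with
  | zero => simp
  | succ k ih =>
      calc (b*a)^(k+1) * b = (b*a)^k * (b * (a * b)) := by
            rw [pow_succ]
            simp [mul_assoc]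
        _ = b * (a*b)^(k+1) := by rw [← mul_assoc, ih, mul_assoc, ← pow_succ]

lemma inv_pow_invol {G : Type*} [Group G] (a b : G) (ha : a*a = 1) (hb : b*b = 1) (k : ℕ) :
    ((a*b)^k)⁻¹ = (b*a)^k := by
  rw [← inv_pow, mul_inv_rev, inv_eq_of_mul_eq_one_right ha, inv_eq_of_mul_eq_one_right hb]

lemma conj_alt_gen {G : Type*} [Group G] (a b : G) (ha : a*a = 1) (p : ℕ) :
    a * (b * (a*b)^p) * a⁻¹ = a * (b*a)^(p+1) := by
  rw [inv_eq_of_mul_eq_one_right ha, ← mul_pal, pow_succ]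
  simp [mul_assoc]

lemma simple_inv_eq (i : B) : (cs.simple i)⁻¹ = cs.simple i :=
  inv_eq_of_mul_eq_one_right (cs.simple_mul_simple_self i)

/-- The conjugation identity producing the entries of the right inversion sequence of an
alternating word. -/
lemma wordProd_alt_conj (i j : B) (k : ℕ) :
    (cs.wordProd (alternatingWord i j k))⁻¹ * (cs.simple (if Even k then j else i)) *
      cs.wordProd (alternatingWord i j k)
      = cs.simple j * (cs.simple i * cs.simple j)^k := by
  have hab := cs.simple_mul_simple_self i
  have hbb := cs.simple_mul_simple_self j
  set a := cs.simple i with ha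
  set b := cs.simple j with hb
  have h := cs.prod_alternatingWord_eq_mul_pow i j k
  rcases Nat.even_or_odd' k with ⟨t, rfl | rfl⟩
  · have he : Even (2*t) := even_two_mul t
    have hdiv : 2*t/2 = t := by omega
    rw [if_pos he, hdiv] at h
    rw [one_mul] at h
    rw [if_pos he, h, inv_pow_invol a b hab hbb]
    calc (b*a)^t * b * (a*b)^t = (b * (a*b)^t) * (a*b)^t := by rw [mul_pal]
      _ = b * (a*b)^(2*t) := by rw [mul_assoc, ← pow_add, two_mul]
  · have ho : ¬ Even (2*t+1) := by simp [Nat.even_add_one, parity_simps]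
    have hdiv : (2*t+1)/2 = t := by omega
    rw [if_neg ho, hdiv] at h
    rw [if_neg ho, h, mul_inv_rev, inv_pow_invol a b hab hbb,
      inv_eq_of_mul_eq_one_right hbb]
    calc (b*a)^t * b * a * (b * (a*b)^t)
        = ((b*a)^t * b) * ((a * b) * (a*b)^t) := by simp [mul_assoc]
      _ = (b * (a*b)^t) * ((a*b) * (a*b)^t) := by rw [mul_pal]
      _ = b * (a*b)^(2*t+1) := by
          rw [mul_assoc, ← pow_succ', ← pow_add, show t + (t+1) = 2*t+1 from by omega]

lemma rightInvSeq_cons (i : B) (ω : List B) :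
    cs.rightInvSeq (i :: ω) =
      ((cs.wordProd ω)⁻¹ * cs.simple i * cs.wordProd ω) :: cs.rightInvSeq ω := rfl

lemma leftInvSeq_cons' (i : B) (ω : List B) :
    cs.leftInvSeq (i :: ω) =
      cs.simple i :: (cs.leftInvSeq ω).map (MulAut.conj (cs.simple i)) := rfl

/-- Closed form for the right inversion sequence of an alternating word. -/
lemma rightInvSeq_alternatingWord (i j : B) (k : ℕ) :
    cs.rightInvSeq (alternatingWord i j k) =
      ((List.range k).map (fun r => cs.simple j * (cs.simple i * cs.simple j)^r)).reverse := by
  induction k with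
  | zero => simp [alternatingWord]
  | succ k ih =>
      rw [alternatingWord_succ', rightInvSeq_cons, ih, wordProd_alt_conj,
        List.range_succ, List.map_append, List.reverse_append]
      simp

/-- Closed form for the left inversion sequence of an alternating word. -/
lemma leftInvSeq_alternatingWord (i j : B) (k : ℕ) :
    cs.leftInvSeq (alternatingWord i j (k+1)) =
      (List.range (k+1)).map (fun p =>
        cs.simple (if Even k then j else i) *
          (cs.simple (if Even k then i else j) * cs.simple (if Even k then j else i))^p) := by
  induction k with
  | zero => simp [alternatingWord, List.range_succ]
  | succ k ih =>
      rw [alternatingWord_succ', leftInvSeq_cons', ih]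
      have hr : ∀ (f : ℕ → W), (List.range (k+2)).map f
          = f 0 :: (List.range (k+1)).map (fun p => f (p+1)) := by
        intro f
        rw [List.range_succ_eq_map, List.map_cons, List.map_map]
        rfl
      rw [hr]
      congr 1
      · simp
      · rw [List.map_map]
        apply List.map_congr_left
        intro p _
        show MulAut.conj (cs.simple (if Even (k+1) then j else i)) _ = _
        rcases Nat.even_or_odd k with he | ho
        · have h1 : ¬ Even (k+1) := by simp [Nat.even_add_one, he]
          simp only [if_pos he, if_neg h1, MulAut.conj_apply]
          rw [conj_alt_gen _ _ (cs.simple_mul_simple_self i)]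
        · have h1 : Even (k+1) := by simp [Nat.even_add_one, Nat.not_even_iff_odd.mpr ho]
          have h2 : ¬ Even k := Nat.not_even_iff_odd.mpr ho
          simp only [if_pos h1, if_neg h2, MulAut.conj_apply]
          rw [conj_alt_gen _ _ (cs.simple_mul_simple_self j)]

end AuxDihedral
/- Part 4: the parity representation and the exchange property -/
section AuxParity

open List CoxeterSystem

variable {B : Type*} {W : Type*} [Group W] {M : CoxeterMatrix B} (cs : CoxeterSystem M W)

/-- The parity representation generator. -/
def CoxeterSystem.ceta [DecidableEq W] (i : B) : Function.End (W × ZMod 2) :=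
  fun p => (cs.simple i * p.1 * cs.simple i, p.2 + if p.1 = cs.simple i then 1 else 0)

lemma CoxeterSystem.ceta_prod_apply [DecidableEq W] (l : List B) (w : W) (ε : ZMod 2) :
    ((l.map (cs.ceta)).prod) (w, ε)
      = (cs.wordProd l * w * (cs.wordProd l)⁻¹,
          ε + (((cs.rightInvSeq l).count w : ℕ) : ZMod 2)) := by
  induction l generalizing ε with
  | nil => simp [Function.End.one_def]
  | cons i l ih =>
      rw [List.map_cons, List.prod_cons, Function.End.mul_def]
      show cs.ceta i (((l.map (cs.ceta)).prod) (w, ε)) = _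
      rw [ih]
      unfold ceta
      have hiff : (cs.wordProd l * w * (cs.wordProd l)⁻¹ = cs.simple i)
          ↔ ((cs.wordProd l)⁻¹ * cs.simple i * cs.wordProd l = w) := by
        constructor
        · intro h
          rw [← h]
          group
        · intro h
          rw [← h]
          group
      have hc : ((cs.rightInvSeq (i :: l)).count w : ℕ)
          = (cs.rightInvSeq l).count w
            + if (cs.wordProd l)⁻¹ * cs.simple i * cs.wordProd l = w then 1 else 0 := by
        rw [rightInvSeq_cons, List.count_cons]
        simp only [beq_iff_eq]
      ext
      · show cs.simple i * (cs.wordProd l * w * (cs.wordProd l)⁻¹) * cs.simple i = _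
        rw [wordProd_cons, mul_inv_rev, simple_inv_eq]
        group
      · show ε + ((cs.rightInvSeq l).count w : ZMod 2)
            + (if cs.wordProd l * w * (cs.wordProd l)⁻¹ = cs.simple i then 1 else 0) = _
        rw [hc]
        push_cast
        rw [if_congr hiff rfl rfl]
        ring

lemma CoxeterSystem.ceta_liftable [DecidableEq W] : M.IsLiftable cs.ceta := by
  intro i j
  have key : ∀ m' : ℕ, (cs.ceta i * cs.ceta j) ^ m'
      = ((alternatingWord i j (2*m')).map cs.ceta).prod := by
    intro m'
    induction m' with
    | zero => simp [alternatingWord]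
    | succ m' ih =>
        have h1 : 2 * (m'+1) = (2*m'+1)+1 := by omega
        have h2 : alternatingWord i j ((2*m'+1)+1)
            = i :: j :: alternatingWord i j (2*m') := by
          rw [alternatingWord_succ', alternatingWord_succ']
          have : ¬ Even (2*m'+1) := by simp [Nat.even_add_one, parity_simps]
          rw [if_neg this, if_pos (even_two_mul m')]
        rw [h1, h2, pow_succ', ih, List.map_cons, List.map_cons, List.prod_cons,
          List.prod_cons, mul_assoc]
  rw [key (M i j)]
  funext p
  obtain ⟨w, ε⟩ := p
  rw [ceta_prod_apply]
  have hπ : cs.wordProd (alternatingWord i j (2 * M i j)) = 1 := by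
    rw [cs.prod_alternatingWord_eq_mul_pow, if_pos (even_two_mul (M i j)),
      Nat.mul_div_cancel_left _ (by norm_num : 0 < 2), one_mul, cs.simple_mul_simple_pow]
  have hcnt : ∃ c, ((cs.rightInvSeq (alternatingWord i j (2 * M i j))).count w) = c + c := by
    rw [rightInvSeq_alternatingWord, List.count_reverse, two_mul, List.range_add,
      List.map_append, List.count_append]
    have : ∀ r, cs.simple j * (cs.simple i * cs.simple j) ^ (M i j + r)
        = cs.simple j * (cs.simple i * cs.simple j) ^ r := by
      intro r
      rw [pow_add, cs.simple_mul_simple_pow, one_mul]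
    have hmap : (List.map (fun x => M i j + x) (List.range (M i j))).map
          (fun r => cs.simple j * (cs.simple i * cs.simple j) ^ r)
        = (List.range (M i j)).map (fun r => cs.simple j * (cs.simple i * cs.simple j) ^ r) := by
      rw [List.map_map]
      apply List.map_congr_left
      intro r _
      exact this r
    rw [hmap]
    exact ⟨_, rfl⟩
  obtain ⟨c, hc⟩ := hcnt
  show _ = (1 : Function.End (W × ZMod 2)) (w, ε)
  rw [Function.End.one_def]
  rw [hπ, hc]
  have hzc : ((c + c : ℕ) : ZMod 2) = 0 := by
    push_cast
    rw [show ((c : ZMod 2) + c) = 2 * c by ring, show (2 : ZMod 2) = 0 from rfl, zero_mul]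
  rw [hzc, add_zero]
  simp

/-- Parity of the number of occurrences in the right inversion sequence depends only on the
element represented by the word. -/
lemma CoxeterSystem.count_rightInvSeq_parity [DecidableEq W] (l l' : List B)
    (h : cs.wordProd l = cs.wordProd l') (w : W) :
    (((cs.rightInvSeq l).count w : ℕ) : ZMod 2) = (((cs.rightInvSeq l').count w : ℕ) : ZMod 2) := by
  have hE : ∀ l'' : List B, (l''.map cs.ceta).prod
      = cs.lift ⟨cs.ceta, cs.ceta_liftable⟩ (cs.wordProd l'') := by
    intro l''
    rw [wordProd, MonoidHom.map_list_prod, List.map_map]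
    congr 1
    apply List.map_congr_left
    intro x _
    exact (lift_apply_simple cs (cs.ceta_liftable) x).symm
  have h2 : ((l.map cs.ceta).prod) (w, 0) = ((l'.map cs.ceta).prod) (w, 0) := by
    rw [hE, hE, h]
  rw [ceta_prod_apply, ceta_prod_apply] at h2
  have := congrArg Prod.snd h2
  simpa using this

/-- The exchange property, membership form, right version. -/
lemma CoxeterSystem.mem_rightInvSeq_of_isRightDescent {ω : List B} (hω : cs.IsReduced ω) {i : B}
    (h : cs.IsRightDescent (cs.wordProd ω) i) : cs.simple i ∈ cs.rightInvSeq ω := by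
  classical
  by_contra hmem
  have hcnt0 : (cs.rightInvSeq ω).count (cs.simple i) = 0 := List.count_eq_zero.mpr hmem
  obtain ⟨τ, hτred, hτprod⟩ := cs.exists_reduced_word' (cs.wordProd ω * cs.simple i)
  have hπ : cs.wordProd (τ ++ [i]) = cs.wordProd ω := by
    rw [wordProd_append, wordProd_singleton, ← hτprod, mul_assoc,
      cs.simple_mul_simple_self, mul_one]
  have hpar := cs.count_rightInvSeq_parity (τ ++ [i]) ω hπ (cs.simple i)
  rw [hcnt0] at hpar
  have hconcat : cs.rightInvSeq (τ ++ [i])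
      = ((cs.rightInvSeq τ).map (MulAut.conj (cs.simple i))).concat (cs.simple i) := by
    rw [← List.concat_eq_append]
    exact cs.rightInvSeq_concat τ i
  have hcount : (cs.rightInvSeq (τ ++ [i])).count (cs.simple i)
      = (cs.rightInvSeq τ).count (cs.simple i) + 1 := by
    rw [hconcat, List.concat_eq_append, List.count_append]
    have hfix : MulAut.conj (cs.simple i) (cs.simple i) = cs.simple i := by
      simp [MulAut.conj_apply]
    have : ((cs.rightInvSeq τ).map (MulAut.conj (cs.simple i))).count (cs.simple i)
        = (cs.rightInvSeq τ).count (cs.simple i) := by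
      nth_rw 1 [← hfix]
      exact List.count_map_of_injective _ _ (MulAut.conj (cs.simple i)).injective _
    rw [this]
    simp
  rw [hcount] at hpar
  -- parity: count τ + 1 ≡ 0, so count τ is odd, in particular positive
  have hodd : (cs.rightInvSeq τ).count (cs.simple i) ≠ 0 := by
    intro h0
    rw [h0] at hpar
    simp at hpar
  have hmemτ : cs.simple i ∈ cs.rightInvSeq τ := by
    rw [← List.count_pos_iff]
    omega
  have hinv := cs.isRightInversion_of_mem_rightInvSeq hτred hmemτ
  have : cs.length (cs.wordProd ω * cs.simple i * cs.simple i) < cs.length (cs.wordProd ω * cs.simple i) := by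
    rw [← hτprod] at hinv
    exact hinv.2
  rw [mul_assoc, cs.simple_mul_simple_self, mul_one] at this
  unfold CoxeterSystem.IsRightDescent at h
  omega

/-- The exchange property, membership form, left version. -/
lemma CoxeterSystem.mem_leftInvSeq_of_isLeftDescent {ω : List B} (hω : cs.IsReduced ω) {i : B}
    (h : cs.IsLeftDescent (cs.wordProd ω) i) : cs.simple i ∈ cs.leftInvSeq ω := by
  have hrev : cs.IsReduced ω.reverse := (cs.isReduced_reverse_iff ω).mpr hω
  have hdesc : cs.IsRightDescent (cs.wordProd ω.reverse) i := by
    rw [cs.wordProd_reverse]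
    exact (cs.isRightDescent_inv_iff).mpr h
  have := cs.mem_rightInvSeq_of_isRightDescent hrev hdesc
  rw [cs.rightInvSeq_reverse] at this
  exact List.mem_reverse.mp this

end AuxParity
/- Part 5: alternating words are reduced; alternating prefixes -/
section AuxPrefix

open List CoxeterSystem

variable {B : Type*} {W : Type*} [Group W] {M : CoxeterMatrix B} (cs : CoxeterSystem M W)

lemma CoxeterSystem.not_mem_leftInvSeq_alt {i j : B} (hij : i ≠ j) (k : ℕ)
    (hk : M i j = 0 ∨ k + 1 ≤ M i j) :
    cs.simple (if Even k then j else i) ∉ cs.leftInvSeq (alternatingWord i j k) := by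
  intro hmem
  rcases k with _ | k'
  · simp [alternatingWord] at hmem
  rw [leftInvSeq_alternatingWord cs] at hmem
  obtain ⟨p, hp, hpe⟩ := List.mem_map.mp hmem
  rw [List.mem_range] at hp
  -- identify letters
  set x := if Even k' then j else i with hx
  set y := if Even k' then i else j with hy
  have hcy : (if Even (k'+1) then j else i) = y := by
    rcases Nat.even_or_odd k' with he | ho
    · simp [hx, hy, he, Nat.even_add_one]
    · simp [hx, hy, Nat.not_even_iff_odd.mpr ho, Nat.even_add_one]
  rw [hcy] at hpe
  -- (s y * s x)^(p+1) = 1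
  have hrel : (cs.simple y * cs.simple x)^(p+1) = 1 := by
    have h1 : cs.simple y * (cs.simple x * (cs.simple y * cs.simple x)^p) = 1 := by
      rw [hpe, cs.simple_mul_simple_self]
    calc (cs.simple y * cs.simple x)^(p+1)
        = cs.simple y * (cs.simple x * (cs.simple y * cs.simple x)^p) := by
          rw [pow_succ']
          simp [mul_assoc]
      _ = 1 := h1
  have hxy : y ≠ x := by
    rcases Nat.even_or_odd k' with he | ho
    · simp only [hx, hy, if_pos he]; exact hij
    · simp only [hx, hy, if_neg (Nat.not_even_iff_odd.mpr ho)]; exact hij.symm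
  have hMyx : M.M y x = M.M i j := by
    rcases Nat.even_or_odd k' with he | ho
    · simp only [hx, hy, if_pos he]
    · simp only [hx, hy, if_neg (Nat.not_even_iff_odd.mpr ho)]
      exact M.symmetric j i
  refine pow_simple_mul_simple_ne_one M cs hxy (Nat.succ_pos p) ?_ hrel
  rw [hMyx]
  rcases hk with h0 | hle
  · exact Or.inl h0
  · exact Or.inr (by omega)

lemma CoxeterSystem.isReduced_alternatingWord' {i j : B} (hij : i ≠ j) (k : ℕ)
    (hk : M i j = 0 ∨ k ≤ M i j) : cs.IsReduced (alternatingWord i j k) := by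
  induction k with
  | zero => simp [CoxeterSystem.IsReduced, alternatingWord]
  | succ k ih =>
      have hk' : M i j = 0 ∨ k ≤ M i j := by
        rcases hk with h | h
        · exact Or.inl h
        · exact Or.inr (by omega)
      have hred := ih hk'
      have hlenk : cs.length (cs.wordProd (alternatingWord i j k)) = k := by
        have := hred
        unfold CoxeterSystem.IsReduced at this
        rwa [length_alternatingWord] at this
      unfold CoxeterSystem.IsReduced
      rw [alternatingWord_succ', wordProd_cons, List.length_cons, length_alternatingWord]
      rcases cs.length_simple_mul (cs.wordProd (alternatingWord i j k))
          (if Even k then j else i) with hlen | hlen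
      · rw [hlen, hlenk]
      · exfalso
        have hdesc : cs.IsLeftDescent (cs.wordProd (alternatingWord i j k))
            (if Even k then j else i) := by
          unfold CoxeterSystem.IsLeftDescent
          omega
        exact cs.not_mem_leftInvSeq_alt hij k hk
          (cs.mem_leftInvSeq_of_isLeftDescent hred hdesc)

lemma eraseIdx_append_of_le {α : Type*} (l₁ l₂ : List α) (p : ℕ) (h : l₁.length ≤ p) :
    (l₁ ++ l₂).eraseIdx p = l₁ ++ l₂.eraseIdx (p - l₁.length) := by
  induction l₁ generalizing p with
  | nil => simp
  | cons a l₁ ih =>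
      rcases p with _ | p'
      · simp at h
      · rw [List.cons_append, List.eraseIdx_cons_succ, ih p' (by simpa using h)]
        simp

/-- Alternating prefixes of reduced words: if `i` and `j` are both left descents of `w`,
then `w` has a reduced word beginning with the alternating word of any allowed length. -/
lemma CoxeterSystem.exists_alt_prefix (w : W) {i j : B} (hij : i ≠ j)
    (hi : cs.IsLeftDescent w i) (hj : cs.IsLeftDescent w j) (k : ℕ)
    (hk : M i j = 0 ∨ k ≤ M i j) :
    ∃ z, cs.IsReduced (alternatingWord i j k ++ z)
      ∧ cs.wordProd (alternatingWord i j k ++ z) = w := by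
  induction k with
  | zero =>
      obtain ⟨z, hz, hzw⟩ := cs.exists_reduced_word' w
      exact ⟨z, by simpa [alternatingWord] using hz, by simp [alternatingWord, hzw.symm]⟩
  | succ k ih =>
      have hk' : M i j = 0 ∨ k ≤ M i j := by
        rcases hk with h | h
        · exact Or.inl h
        · exact Or.inr (by omega)
      obtain ⟨z, hzred, hzw⟩ := ih hk'
      set ω := alternatingWord i j k ++ z with hω
      set c := if Even k then j else i with hc
      have hcdesc : cs.IsLeftDescent w c := by
        rw [hc]
        split
        · exact hj
        · exact hi
      have hmem : cs.simple c ∈ cs.leftInvSeq ω :=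
        cs.mem_leftInvSeq_of_isLeftDescent hzred (hzw ▸ hcdesc)
      obtain ⟨p, hplt, hpeq⟩ := List.getElem_of_mem hmem
      have hplen : p < ω.length := by
        have := hplt
        rwa [cs.length_leftInvSeq] at this
      have hlenω : ω.length = k + z.length := by simp [hω]
      -- the exchanged index avoids the alternating prefix
      have hpk : k ≤ p := by
        by_contra hlt
        push_neg at hlt
        apply cs.not_mem_leftInvSeq_alt hij k
          (by rcases hk with h | h; exact Or.inl h; exact Or.inr h)
        have ht : ω.take k = alternatingWord i j k := by
          rw [hω]
          have h := List.take_left (l₁ := alternatingWord i j k) (l₂ := z)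
          rwa [length_alternatingWord] at h
        have htake : cs.leftInvSeq (alternatingWord i j k) = (cs.leftInvSeq ω).take k := by
          rw [← ht]
          exact cs.leftInvSeq_take ω k
        rw [← hc, htake]
        have hplt' : p < ((cs.leftInvSeq ω).take k).length := by
          rw [List.length_take]
          refine lt_min hlt ?_
          rw [cs.length_leftInvSeq]
          omega
        have : ((cs.leftInvSeq ω).take k)[p] = cs.simple c := by
          rw [List.getElem_take]
          exact hpeq
        rw [← this]
        exact List.getElem_mem _
      -- the exchange
      have hzlen : p - k < z.length := by omega
      have hznil : 1 ≤ z.length := by omega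
      have herase : cs.simple c * w = cs.wordProd (alternatingWord i j k ++ z.eraseIdx (p - k)) := by
        have h1 := cs.getD_leftInvSeq_mul_wordProd ω p
        rw [List.getD_eq_getElem _ _ hplt, hpeq, hzw] at h1
        rw [h1, hω, eraseIdx_append_of_le _ _ p (by simp; omega)]
        congr 2
        simp
      refine ⟨z.eraseIdx (p - k), ?_, ?_⟩
      · -- reduced
        unfold CoxeterSystem.IsReduced
        have hπ : cs.wordProd (alternatingWord i j (k+1) ++ z.eraseIdx (p - k)) = w := by
          rw [alternatingWord_succ', List.cons_append, wordProd_cons, ← hc, ← herase,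
            ← mul_assoc, cs.simple_mul_simple_self, one_mul]
        rw [hπ]
        have hlw : cs.length w = k + z.length := by
          have := hzred
          unfold CoxeterSystem.IsReduced at this
          rw [hzw] at this
          omega
        have hle : (z.eraseIdx (p-k)).length = z.length - 1 := by
          rw [List.length_eraseIdx, if_pos hzlen]
        simp only [List.length_append, length_alternatingWord, hle, hlw]
        omega
      · rw [alternatingWord_succ', List.cons_append, wordProd_cons, ← hc, ← herase,
          ← mul_assoc, cs.simple_mul_simple_self, one_mul]

end AuxPrefix
/- Part 6: the Artin–Tits group and Matsumoto's theorem -/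

/-- The braid relation of the Artin–Tits group associated with a Coxeter matrix `M`:
the word `σᵢσⱼσᵢ⋯` (`M i j` letters) equals `σⱼσᵢσⱼ⋯` (`M i j` letters), as an element
of the free group. -/
def artinBraidRelation {B : Type*} (M : CoxeterMatrix B) (i j : B) : FreeGroup B :=
  ((CoxeterSystem.alternatingWord i j (M i j)).map FreeGroup.of).prod *
    (((CoxeterSystem.alternatingWord j i (M i j)).map FreeGroup.of).prod)⁻¹

/-- The Artin–Tits (generalized braid) group of a Coxeter matrix `M`: the group
generated by `σ_s`, `s ∈ S`, subject only to the braid relations (for `M i j ≠ 0`,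
i.e. `m_{ij} < ∞`). -/
def ArtinTitsGroup {B : Type*} (M : CoxeterMatrix B) : Type _ :=
  PresentedGroup {r : FreeGroup B | ∃ i j, M i j ≠ 0 ∧ r = artinBraidRelation M i j}

instance {B : Type*} (M : CoxeterMatrix B) : Group (ArtinTitsGroup M) :=
  inferInstanceAs (Group (PresentedGroup _))

/-- The positive lift of a word in the generators to the Artin–Tits group. -/
def positiveWordLift {B : Type*} (M : CoxeterMatrix B) (l : List B) : ArtinTitsGroup M :=
  (l.map (fun i => (PresentedGroup.of i : ArtinTitsGroup M))).prod

section AuxArtin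

open List CoxeterSystem

variable {B : Type*} (M : CoxeterMatrix B)

lemma positiveWordLift_cons (i : B) (l : List B) :
    positiveWordLift M (i :: l) = positiveWordLift M [i] * positiveWordLift M l := by
  unfold positiveWordLift
  rw [List.map_cons, List.prod_cons, List.map_singleton, List.prod_singleton]
  rfl

lemma positiveWordLift_append (l l' : List B) :
    positiveWordLift M (l ++ l') = positiveWordLift M l * positiveWordLift M l' := by
  unfold positiveWordLift
  rw [List.map_append, List.prod_append]
  rfl

lemma positiveWordLift_eq_mk (l : List B) :
    positiveWordLift M l
      = (PresentedGroup.mk {r : FreeGroup B | ∃ i j, M i j ≠ 0 ∧ r = artinBraidRelation M i j}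
          ((l.map FreeGroup.of).prod) : ArtinTitsGroup M) := by
  unfold positiveWordLift
  rw [MonoidHom.map_list_prod, List.map_map]
  rfl

lemma positiveWordLift_braid {i j : B} (h : M i j ≠ 0) :
    positiveWordLift M (alternatingWord i j (M i j))
      = positiveWordLift M (alternatingWord j i (M i j)) := by
  have hrel : (PresentedGroup.mk {r : FreeGroup B | ∃ i j, M i j ≠ 0 ∧ r = artinBraidRelation M i j}
      (artinBraidRelation M i j) : ArtinTitsGroup M) = 1 := by
    apply (QuotientGroup.eq_one_iff _).mpr
    apply Subgroup.subset_normalClosure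
    exact ⟨i, j, h, rfl⟩
  unfold artinBraidRelation at hrel
  rw [map_mul, map_inv, mul_inv_eq_one] at hrel
  rw [positiveWordLift_eq_mk, positiveWordLift_eq_mk]
  exact hrel

end AuxArtin

section Matsumoto

open List CoxeterSystem

variable {B : Type*} {W : Type*} [Group W] {M : CoxeterMatrix B} (cs : CoxeterSystem M W)

lemma CoxeterSystem.isReduced_tail {i : B} {t : List B} (h : cs.IsReduced (i :: t)) :
    cs.IsReduced t := by
  have := h.drop 1
  simpa using this

lemma CoxeterSystem.positiveLift_aux : ∀ (n : ℕ) (l₁ l₂ : List B), l₁.length ≤ n →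
    cs.IsReduced l₁ → cs.IsReduced l₂ → cs.wordProd l₁ = cs.wordProd l₂ →
    positiveWordLift M l₁ = positiveWordLift M l₂ := by
  intro n
  induction n with
  | zero =>
      intro l₁ l₂ hlen h₁ h₂ hp
      have hl₁ : l₁ = [] := List.length_eq_zero_iff.mp (by omega)
      subst hl₁
      have hl₂ : l₂ = [] := by
        apply List.length_eq_zero_iff.mp
        rw [← h₂, ← hp, wordProd_nil]
        exact (cs.length_eq_zero_iff).mpr rfl
      subst hl₂
      rfl
  | succ n IH =>
      intro l₁ l₂ hlen h₁ h₂ hp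
      cases l₁ with
      | nil =>
          have hl₂ : l₂ = [] := by
            apply List.length_eq_zero_iff.mp
            rw [← h₂, ← hp, wordProd_nil]
            exact (cs.length_eq_zero_iff).mpr rfl
          subst hl₂
          rfl
      | cons i t₁ =>
          cases l₂ with
          | nil =>
              exfalso
              have hz : cs.length (cs.wordProd (i :: t₁)) = 0 := by
                rw [hp, wordProd_nil]
                exact (cs.length_eq_zero_iff).mpr rfl
              have := h₁
              unfold CoxeterSystem.IsReduced at this
              rw [hz] at this
              simp at this
          | cons j t₂ =>
              obtain ⟨w, hwdef⟩ : ∃ w, cs.wordProd (i :: t₁) = w := ⟨_, rfl⟩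
              have hp2 : cs.wordProd (j :: t₂) = w := by rw [← hp]; exact hwdef
              have hlw₁ : cs.length w = t₁.length + 1 := by
                have := h₁
                unfold CoxeterSystem.IsReduced at this
                rw [hwdef] at this
                simpa using this
              have hlw₂ : cs.length w = t₂.length + 1 := by
                have := h₂
                unfold CoxeterSystem.IsReduced at this
                rw [hp2] at this
                simpa using this
              have hlen1 : t₁.length ≤ n := by
                simp only [List.length_cons] at hlen
                omega
              have hlen2 : t₂.length ≤ n := by omega
              -- the key cons step
              have key : ∀ (a : B) (u v : List B), u.length ≤ n → cs.IsReduced (a :: u) →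
                  cs.IsReduced (a :: v) → cs.wordProd (a :: u) = cs.wordProd (a :: v) →
                  positiveWordLift M (a :: u) = positiveWordLift M (a :: v) := by
                intro a u v hu hru hrv hpuv
                have hu' := cs.isReduced_tail hru
                have hv' := cs.isReduced_tail hrv
                have hprod : cs.wordProd u = cs.wordProd v := by
                  rw [wordProd_cons, wordProd_cons] at hpuv
                  exact mul_left_cancel hpuv
                rw [positiveWordLift_cons M a u, positiveWordLift_cons M a v, IH u v hu hu' hv' hprod]
              by_cases hij : i = j
              · subst hij
                exact key i t₁ t₂ hlen1 h₁ h₂ hp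
              · -- two distinct left descents
                have hi : cs.IsLeftDescent w i := by
                  unfold CoxeterSystem.IsLeftDescent
                  have h1 : cs.simple i * w = cs.wordProd t₁ := by
                    rw [← hwdef, wordProd_cons, ← mul_assoc, cs.simple_mul_simple_self, one_mul]
                  rw [h1]
                  have := cs.length_wordProd_le t₁
                  omega
                have hj : cs.IsLeftDescent w j := by
                  unfold CoxeterSystem.IsLeftDescent
                  have h1 : cs.simple j * w = cs.wordProd t₂ := by
                    rw [← hp2, wordProd_cons, ← mul_assoc, cs.simple_mul_simple_self, one_mul]
                  rw [h1]
                  have := cs.length_wordProd_le t₂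
                  omega
                have hM0 : M.M i j ≠ 0 := by
                  intro h0
                  obtain ⟨z, hzred, hzw⟩ :=
                    cs.exists_alt_prefix w hij hi hj (cs.length w + 1) (Or.inl h0)
                  have hL := hzred
                  unfold CoxeterSystem.IsReduced at hL
                  rw [hzw] at hL
                  simp only [List.length_append, length_alternatingWord] at hL
                  omega
                obtain ⟨z, hzred, hzw⟩ :=
                  cs.exists_alt_prefix w hij hi hj (M.M i j) (Or.inr le_rfl)
                have hbraidW : cs.wordProd (alternatingWord j i (M.M i j) ++ z) = w := by
                  rw [wordProd_append] at hzw ⊢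
                  rw [← hzw]
                  congr 1
                  have hsub := cs.prod_alternatingWord_eq_prod_alternatingWord_sub i j (M.M i j)
                    (by omega)
                  rw [show M.M i j * 2 - M.M i j = M.M i j from by omega] at hsub
                  exact hsub.symm
                have hzred' : cs.IsReduced (alternatingWord j i (M.M i j) ++ z) := by
                  have hL := hzred
                  unfold CoxeterSystem.IsReduced at hL ⊢
                  rw [hbraidW, ← hzw]
                  simpa using hL
                obtain ⟨m', hm'⟩ : ∃ m', M.M i j = m' + 1 := ⟨M.M i j - 1, by omega⟩
                have hsplit1 : alternatingWord i j (M.M i j)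
                    = (if Even m' then j else i) :: alternatingWord i j m' := by
                  rw [hm', alternatingWord_succ']
                have hsplit2 : alternatingWord j i (M.M i j)
                    = (if Even m' then i else j) :: alternatingWord j i m' := by
                  rw [hm', alternatingWord_succ']
                have hbraidA : positiveWordLift M (alternatingWord i j (M.M i j) ++ z)
                    = positiveWordLift M (alternatingWord j i (M.M i j) ++ z) := by
                  rw [positiveWordLift_append, positiveWordLift_append,
                    positiveWordLift_braid M hM0]
                rcases Nat.even_or_odd m' with hpar | hpar
                · rw [if_pos hpar] at hsplit1 hsplit2
                  have hu2red : cs.IsReduced (i :: (alternatingWord j i m' ++ z)) := by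
                    rw [← List.cons_append, ← hsplit2]; exact hzred'
                  have hu2w : cs.wordProd (i :: (alternatingWord j i m' ++ z)) = w := by
                    rw [← List.cons_append, ← hsplit2]; exact hbraidW
                  have hu1red : cs.IsReduced (j :: (alternatingWord i j m' ++ z)) := by
                    rw [← List.cons_append, ← hsplit1]; exact hzred
                  have hu1w : cs.wordProd (j :: (alternatingWord i j m' ++ z)) = w := by
                    rw [← List.cons_append, ← hsplit1]; exact hzw
                  calc positiveWordLift M (i :: t₁)
                      = positiveWordLift M (i :: (alternatingWord j i m' ++ z)) :=
                        key i t₁ _ hlen1 h₁ hu2red (by rw [hu2w]; exact hwdef)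
                    _ = positiveWordLift M (alternatingWord j i (M.M i j) ++ z) := by
                        rw [hsplit2, List.cons_append]
                    _ = positiveWordLift M (alternatingWord i j (M.M i j) ++ z) := hbraidA.symm
                    _ = positiveWordLift M (j :: (alternatingWord i j m' ++ z)) := by
                        rw [hsplit1, List.cons_append]
                    _ = positiveWordLift M (j :: t₂) :=
                        (key j t₂ _ hlen2 h₂ hu1red (by rw [hu1w]; exact hp2)).symm
                · rw [if_neg (Nat.not_even_iff_odd.mpr hpar)] at hsplit1 hsplit2
                  have hu1red : cs.IsReduced (i :: (alternatingWord i j m' ++ z)) := by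
                    rw [← List.cons_append, ← hsplit1]; exact hzred
                  have hu1w : cs.wordProd (i :: (alternatingWord i j m' ++ z)) = w := by
                    rw [← List.cons_append, ← hsplit1]; exact hzw
                  have hu2red : cs.IsReduced (j :: (alternatingWord j i m' ++ z)) := by
                    rw [← List.cons_append, ← hsplit2]; exact hzred'
                  have hu2w : cs.wordProd (j :: (alternatingWord j i m' ++ z)) = w := by
                    rw [← List.cons_append, ← hsplit2]; exact hbraidW
                  calc positiveWordLift M (i :: t₁)
                      = positiveWordLift M (i :: (alternatingWord i j m' ++ z)) :=
                        key i t₁ _ hlen1 h₁ hu1red (by rw [hu1w]; exact hwdef)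
                    _ = positiveWordLift M (alternatingWord i j (M.M i j) ++ z) := by
                        rw [hsplit1, List.cons_append]
                    _ = positiveWordLift M (alternatingWord j i (M.M i j) ++ z) := hbraidA
                    _ = positiveWordLift M (j :: (alternatingWord j i m' ++ z)) := by
                        rw [hsplit2, List.cons_append]
                    _ = positiveWordLift M (j :: t₂) :=
                        (key j t₂ _ hlen2 h₂ hu2red (by rw [hu2w]; exact hp2)).symm

end Matsumoto

/-- The positive lift `W → B_W` is well defined: two reduced words
expressing the same element of the Coxeter group `W` have equal positive lifts in
the Artin–Tits group `B_W`. -/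
theorem positiveLift_well_defined {B : Type*} {M : CoxeterMatrix B} {W : Type*} [Group W]
    (cs : CoxeterSystem M W) (l₁ l₂ : List B)
    (h₁ : cs.IsReduced l₁) (h₂ : cs.IsReduced l₂)
    (h : cs.wordProd l₁ = cs.wordProd l₂) :
    positiveWordLift M l₁ = positiveWordLift M l₂ :=
  cs.positiveLift_aux l₁.length l₁ l₂ le_rfl h₁ h₂ h
end

section
/- If x is a subword of w (obtained by deleting some letters of a reduced word for w), then the element expressed by x is less than or equal to w in the Bruhat order. -/
/-- The Bruhat order on a Coxeter group: the reflexive-transitive closure of the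
relation `u < u * t` for `t` a reflection with `ℓ(u) < ℓ(u * t)`. -/
def bruhatLE {B : Type*} {M : CoxeterMatrix B} {W : Type*} [Group W]
    (cs : CoxeterSystem M W) : W → W → Prop :=
  Relation.ReflTransGen (fun u v => ∃ t, cs.IsReflection t ∧ v = u * t ∧
    cs.length u < cs.length v)

namespace SubwordAux

open CoxeterSystem List

variable {B : Type*} {M : CoxeterMatrix B} {W : Type*} [Group W] (cs : CoxeterSystem M W)

/-! ### Basic Bruhat order lemmas -/

lemma bruhatLE_trans {u v w : W} (h1 : bruhatLE cs u v) (h2 : bruhatLE cs v w) :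
    bruhatLE cs u w := Relation.ReflTransGen.trans h1 h2

lemma bruhatLE_refl (u : W) : bruhatLE cs u u := Relation.ReflTransGen.refl

lemma bruhatLE_step_up {u : W} {t : W} (ht : cs.IsReflection t)
    (h : cs.length u < cs.length (u * t)) : bruhatLE cs u (u * t) :=
  Relation.ReflTransGen.single ⟨t, ht, rfl, h⟩

lemma bruhatLE_step_down {u : W} {t : W} (ht : cs.IsReflection t)
    (h : cs.length (u * t) < cs.length u) : bruhatLE cs (u * t) u := by
  have hu : u = (u * t) * t := by rw [mul_assoc, ht.mul_self, mul_one]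
  exact Relation.ReflTransGen.single ⟨t, ht, hu, h⟩

lemma isReflection_inv_simple_mul (u : W) (i : B) :
    cs.IsReflection (u⁻¹ * cs.simple i * u) := by
  have := (cs.isReflection_simple i).conj u⁻¹
  simpa using this

lemma bruhatLE_smul_of_lt {u : W} (i : B)
    (h : cs.length u < cs.length (cs.simple i * u)) :
    bruhatLE cs u (cs.simple i * u) := by
  have key : cs.simple i * u = u * (u⁻¹ * cs.simple i * u) := by group
  rw [key] at h ⊢
  exact bruhatLE_step_up cs (isReflection_inv_simple_mul cs u i) h

lemma bruhatLE_of_smul_lt {u : W} (i : B)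
    (h : cs.length (cs.simple i * u) < cs.length u) :
    bruhatLE cs (cs.simple i * u) u := by
  have key : cs.simple i * u = u * (u⁻¹ * cs.simple i * u) := by group
  rw [key] at h ⊢
  exact bruhatLE_step_down cs (isReflection_inv_simple_mul cs u i) h

lemma length_le_of_bruhatLE {u w : W} (h : bruhatLE cs u w) :
    cs.length u ≤ cs.length w := by
  induction h with
  | refl => exact le_rfl
  | tail _ h2 ih => obtain ⟨t, _, rfl, hlt⟩ := h2; omega

/-! ### Group-theoretic helpers -/

lemma simple_conj_conj (i : B) (x : W) :
    cs.simple i * (cs.simple i * x * cs.simple i) * cs.simple i = x := by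
  have hs : cs.simple i * cs.simple i = 1 := cs.simple_mul_simple_self i
  have : cs.simple i * (cs.simple i * x * cs.simple i) * cs.simple i
      = (cs.simple i * cs.simple i) * x * (cs.simple i * cs.simple i) := by group
  rw [this, hs, one_mul, mul_one]

lemma simple_sandwich_eq_iff (i : B) (t w : W) :
    cs.simple i * t * cs.simple i = w ↔ t = cs.simple i * w * cs.simple i := by
  constructor
  · rintro rfl
    rw [simple_conj_conj]
  · rintro rfl
    rw [simple_conj_conj]

lemma conj_eq_iff' (u x y : W) : u * x * u⁻¹ = y ↔ x = u⁻¹ * y * u := by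
  constructor
  · rintro rfl; group
  · rintro rfl; group

/-! ### Cons formulas for inversion sequences -/

lemma rightInvSeq_cons' (i : B) (ω : List B) :
    cs.rightInvSeq (i :: ω)
      = ((cs.wordProd ω)⁻¹ * cs.simple i * cs.wordProd ω) :: cs.rightInvSeq ω := rfl

lemma leftInvSeq_cons' (i : B) (ω : List B) :
    cs.leftInvSeq (i :: ω)
      = cs.simple i :: (cs.leftInvSeq ω).map (⇑(MulAut.conj (cs.simple i))) := rfl

lemma rightInvSeq_append' (α β : List B) :
    cs.rightInvSeq (α ++ β) =
      (cs.rightInvSeq α).map (fun x => (cs.wordProd β)⁻¹ * x * cs.wordProd β)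
        ++ cs.rightInvSeq β := by
  induction α with
  | nil => simp [rightInvSeq]
  | cons i α ih =>
    rw [List.cons_append, rightInvSeq_cons', rightInvSeq_cons', ih]
    simp only [List.map_cons, List.cons_append, cs.wordProd_append]
    congr 1
    group

/-! ### The parity representation -/

variable [DecidableEq W]

/-- The involution on `W × ZMod 2` associated to the simple reflection `i`. -/
def tog (i : B) : Equiv.Perm (W × ZMod 2) :=
  Function.Involutive.toPerm
    (fun p => (cs.simple i * p.1 * cs.simple i, p.2 + if p.1 = cs.simple i then 1 else 0))
    (by
      rintro ⟨t, z⟩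
      have h2 : (cs.simple i * t * cs.simple i = cs.simple i) ↔ t = cs.simple i := by
        rw [simple_sandwich_eq_iff]
        rw [cs.simple_mul_simple_self, one_mul]
      simp only [Prod.mk.injEq]
      refine ⟨simple_conj_conj cs i t, ?_⟩
      simp only [h2]
      by_cases h : t = cs.simple i
      · rw [if_pos h, add_assoc, (by decide : (1 : ZMod 2) + 1 = 0), add_zero]
      · rw [if_neg h, add_zero, add_zero])

lemma tog_apply (i : B) (t : W) (z : ZMod 2) :
    tog cs i (t, z) = (cs.simple i * t * cs.simple i, z + if t = cs.simple i then 1 else 0) :=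
  rfl

lemma simple_conj_key (i i' : B) :
    cs.simple i' * (cs.simple i * cs.simple i') = (cs.simple i * cs.simple i')⁻¹ * cs.simple i' := by
  have h : cs.simple i' * cs.simple i' = 1 := cs.simple_mul_simple_self i'
  have h2 : cs.simple i * cs.simple i = 1 := cs.simple_mul_simple_self i
  rw [mul_inv_rev, cs.inv_simple, cs.inv_simple]
  calc cs.simple i' * (cs.simple i * cs.simple i')
      = cs.simple i' * cs.simple i * (cs.simple i' * cs.simple i' * cs.simple i') := by
        rw [h, one_mul]; group
    _ = cs.simple i' * cs.simple i * cs.simple i' := by rw [h, one_mul]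

lemma tog_mul_tog_pow (i i' : B) (m : ℕ) (t : W) (z : ZMod 2) :
    ((tog cs i * tog cs i') ^ m) (t, z) =
      ((cs.simple i * cs.simple i') ^ m * t * (((cs.simple i * cs.simple i') ^ m)⁻¹),
        z + ∑ j ∈ Finset.range (2 * m),
          (if t = ((cs.simple i * cs.simple i')⁻¹) ^ j * cs.simple i' then (1 : ZMod 2) else 0)) := by
  induction m generalizing t z with
  | zero => simp
  | succ m ih =>
    set a := cs.simple i * cs.simple i' with ha
    have hkey : cs.simple i' * a = a⁻¹ * cs.simple i' := simple_conj_key cs i i'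
    have step : (tog cs i * tog cs i') (t, z) =
        (a * t * a⁻¹, z + ((if t = cs.simple i' then (1:ZMod 2) else 0)
          + (if t = a⁻¹ * cs.simple i' then (1:ZMod 2) else 0))) := by
      rw [Equiv.Perm.mul_apply, tog_apply, tog_apply]
      have e1 : cs.simple i * (cs.simple i' * t * cs.simple i') * cs.simple i = a * t * a⁻¹ := by
        rw [ha, mul_inv_rev, cs.inv_simple, cs.inv_simple]; group
      have e2 : (cs.simple i' * t * cs.simple i' = cs.simple i) ↔ (t = a⁻¹ * cs.simple i') := by
        rw [simple_sandwich_eq_iff, ha, mul_inv_rev, cs.inv_simple, cs.inv_simple, mul_assoc]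
      simp only [e1, e2, Prod.mk.injEq, true_and]
      ring
    have hshift : ∀ j : ℕ, (a * t * a⁻¹ = (a⁻¹) ^ j * cs.simple i')
        ↔ (t = (a⁻¹) ^ (j + 1 + 1) * cs.simple i') := by
      intro j
      have hc : a⁻¹ * ((a⁻¹) ^ j * cs.simple i') * a = (a⁻¹) ^ (j + 1 + 1) * cs.simple i' := by
        calc a⁻¹ * ((a⁻¹) ^ j * cs.simple i') * a
            = a⁻¹ * (a⁻¹) ^ j * (cs.simple i' * a) := by group
          _ = a⁻¹ * (a⁻¹) ^ j * (a⁻¹ * cs.simple i') := by rw [hkey]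
          _ = (a⁻¹) ^ (j + 1 + 1) * cs.simple i' := by
              rw [pow_succ, pow_succ]; group
      rw [conj_eq_iff' a t ((a⁻¹) ^ j * cs.simple i'), hc]
    rw [pow_succ, Equiv.Perm.mul_apply, step, ih]
    simp only [Prod.mk.injEq]
    constructor
    · simp [pow_succ, mul_inv_rev, mul_assoc]
    · simp only [hshift]
      have h2m : 2 * (m + 1) = (2 * m + 1) + 1 := by ring
      rw [h2m, Finset.sum_range_succ', Finset.sum_range_succ', pow_zero, one_mul, pow_one]
      ring

lemma tog_liftable : CoxeterMatrix.IsLiftable M (fun i => tog cs i) := by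
  intro i i'
  apply Equiv.ext
  rintro ⟨t, z⟩
  rw [tog_mul_tog_pow]
  show _ = (t, z)
  have hm : (cs.simple i * cs.simple i') ^ M i i' = 1 := cs.simple_mul_simple_pow i i'
  have hminv : ((cs.simple i * cs.simple i')⁻¹) ^ M i i' = 1 := by
    rw [inv_pow, hm, inv_one]
  simp only [Prod.mk.injEq]
  constructor
  · rw [hm]; simp
  case right =>
    set a := cs.simple i * cs.simple i' with ha
    have hz : ∑ j ∈ Finset.range (2 * M i i'),
        (if t = (a⁻¹) ^ j * cs.simple i' then (1 : ZMod 2) else 0) = 0 := by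
      rw [two_mul, Finset.sum_range_add]
      have he : ∀ j ∈ Finset.range (M i i'),
          (if t = (a⁻¹) ^ (M i i' + j) * cs.simple i' then (1 : ZMod 2) else 0)
          = (if t = (a⁻¹) ^ j * cs.simple i' then (1 : ZMod 2) else 0) := by
        intro j _
        rw [pow_add, hminv, one_mul]
      rw [Finset.sum_congr rfl he, ← Finset.sum_add_distrib]
      apply Finset.sum_eq_zero
      intro j _
      by_cases h : t = (a⁻¹) ^ j * cs.simple i'
      · rw [if_pos h]; decide
      · rw [if_neg h]; decide
    rw [hz, add_zero]

/-- The parity representation of the Coxeter group. -/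
noncomputable def phi : W →* Equiv.Perm (W × ZMod 2) :=
  cs.lift ⟨fun i => tog cs i, tog_liftable cs⟩

lemma phi_simple (i : B) : phi cs (cs.simple i) = tog cs i :=
  cs.lift_apply_simple (tog_liftable cs) i

lemma phi_wordProd (ω : List B) (t : W) (z : ZMod 2) :
    phi cs (cs.wordProd ω) (t, z) =
      (cs.wordProd ω * t * (cs.wordProd ω)⁻¹,
        z + ((cs.rightInvSeq ω).count t : ZMod 2)) := by
  induction ω generalizing z with
  | nil => simp [rightInvSeq]
  | cons i ω ih =>
    rw [cs.wordProd_cons, map_mul, phi_simple, Equiv.Perm.mul_apply, ih, tog_apply]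
    set u := cs.wordProd ω with hu
    have hcount : ((cs.rightInvSeq (i :: ω)).count t : ZMod 2)
        = ((cs.rightInvSeq ω).count t : ZMod 2)
          + (if u * t * u⁻¹ = cs.simple i then (1 : ZMod 2) else 0) := by
      rw [rightInvSeq_cons', List.count_cons]
      push_cast
      congr 1
      have hbeq : (u⁻¹ * cs.simple i * u == t) = (u * t * u⁻¹ == cs.simple i) := by
        by_cases h : u⁻¹ * cs.simple i * u = t
        · have h2 : u * t * u⁻¹ = cs.simple i := by rw [← h]; group
          simp [h, h2]
        · have h2 : ¬(u * t * u⁻¹ = cs.simple i) := by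
            intro hc; apply h; rw [← hc]; group
          simp [h, h2]
      rw [hbeq]
      by_cases h : u * t * u⁻¹ = cs.simple i <;> simp [h]
    rw [hcount]
    simp only [Prod.mk.injEq]
    constructor
    · rw [mul_inv_rev, cs.inv_simple]; group
    · ring

lemma count_parity_invariant {ω ω' : List B} (h : cs.wordProd ω = cs.wordProd ω') (t : W) :
    ((cs.rightInvSeq ω).count t : ZMod 2) = ((cs.rightInvSeq ω').count t : ZMod 2) := by
  have h1 := phi_wordProd cs ω t 0
  have h2 := phi_wordProd cs ω' t 0
  rw [h] at h1
  rw [h1] at h2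
  have := (Prod.mk.injEq _ _ _ _).mp h2
  simpa using this.2

/-- Positional correspondence: if `t = (π d) * sⱼ * (π d)⁻¹`, then `t` occurs in
`lis d` exactly as often as `sⱼ` occurs in `ris d`. -/
lemma count_leftInvSeq_eq (d : List B) (j : B) (t : W)
    (h : t = cs.wordProd d * cs.simple j * (cs.wordProd d)⁻¹) :
    (cs.leftInvSeq d).count t = (cs.rightInvSeq d).count (cs.simple j) := by
  induction d generalizing t with
  | nil => simp [leftInvSeq, rightInvSeq]
  | cons i d ih =>
    rw [cs.wordProd_cons] at h
    set v := cs.wordProd d with hv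
    have ht' : cs.simple i * t * cs.simple i = v * cs.simple j * v⁻¹ := by
      rw [h, mul_inv_rev, cs.inv_simple]
      have : cs.simple i * (cs.simple i * v * cs.simple j * (v⁻¹ * cs.simple i)) * cs.simple i
          = (cs.simple i * cs.simple i) * (v * cs.simple j * v⁻¹) * (cs.simple i * cs.simple i) := by
        group
      rw [this, cs.simple_mul_simple_self, one_mul, mul_one]
    rw [leftInvSeq_cons', rightInvSeq_cons', List.count_cons, List.count_cons]
    have hinj : Function.Injective (⇑(MulAut.conj (cs.simple i)) : W → W) :=
      (MulAut.conj (cs.simple i)).injective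
    have hmap : ((cs.leftInvSeq d).map (⇑(MulAut.conj (cs.simple i)))).count t
        = (cs.leftInvSeq d).count (cs.simple i * t * cs.simple i) := by
      have happ : (MulAut.conj (cs.simple i)) (cs.simple i * t * cs.simple i) = t := by
        simp only [MulAut.conj_apply, cs.inv_simple]
        exact simple_conj_conj cs i t
      have hcm := List.count_map_of_injective (cs.leftInvSeq d)
        (⇑(MulAut.conj (cs.simple i))) hinj (cs.simple i * t * cs.simple i)
      rw [happ] at hcm
      exact hcm
    rw [hmap, ih _ ht']
    congr 1
    have hiff : (cs.simple i = t) ↔ (v⁻¹ * cs.simple i * v = cs.simple j) := by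
      constructor
      · rintro rfl
        have e : cs.simple i = v * cs.simple j * v⁻¹ := by
          rw [← ht', cs.simple_mul_simple_self, one_mul]
        rw [e]
        group
      · intro hj
        have e : v * cs.simple j * v⁻¹ = cs.simple i := by
          rw [← hj]; group
        rw [e] at ht'
        have h3 := (simple_sandwich_eq_iff cs i t (cs.simple i)).mp ht'
        rw [cs.simple_mul_simple_self, one_mul] at h3
        exact h3.symm
    have hb : (cs.simple i == t) = (v⁻¹ * cs.simple i * v == cs.simple j) := by
      rw [Bool.eq_iff_iff, beq_iff_eq, beq_iff_eq]
      exact hiff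
    rw [← hv, hb]

/-! ### Strong exchange -/

lemma count_reflection_word_odd {t : W} (ht : cs.IsReflection t) :
    ∃ ρ : List B, cs.wordProd ρ = t ∧ ((cs.rightInvSeq ρ).count t : ZMod 2) = 1 := by
  obtain ⟨v, j, rfl⟩ := ht
  obtain ⟨d, hd⟩ := cs.wordProd_surjective v
  refine ⟨d ++ (j :: d.reverse), ?_, ?_⟩
  · rw [cs.wordProd_append, cs.wordProd_cons, cs.wordProd_reverse, hd, mul_assoc]
  · set t := v * cs.simple j * v⁻¹ with hts
    have hg : cs.wordProd (j :: d.reverse) = cs.simple j * v⁻¹ := by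
      rw [cs.wordProd_cons, cs.wordProd_reverse, hd]
    have h1 : cs.rightInvSeq (d ++ (j :: d.reverse))
        = (cs.rightInvSeq d).map
            (fun x => (cs.simple j * v⁻¹)⁻¹ * x * (cs.simple j * v⁻¹))
          ++ cs.rightInvSeq (j :: d.reverse) := by
      rw [rightInvSeq_append', hg]
    have h2 : cs.rightInvSeq (j :: d.reverse) = t :: cs.rightInvSeq d.reverse := by
      rw [rightInvSeq_cons', cs.wordProd_reverse, hd, hts, inv_inv]
    have hmapcount : ((cs.rightInvSeq d).map
        (fun x => (cs.simple j * v⁻¹)⁻¹ * x * (cs.simple j * v⁻¹))).count t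
        = (cs.rightInvSeq d).count (cs.simple j) := by
      have hinj : Function.Injective
          (fun x : W => (cs.simple j * v⁻¹)⁻¹ * x * (cs.simple j * v⁻¹)) := by
        intro x y hxy
        simp only at hxy
        exact mul_left_cancel (mul_right_cancel hxy)
      have happ : (cs.simple j * v⁻¹)⁻¹ * cs.simple j * (cs.simple j * v⁻¹) = t := by
        simp only [mul_inv_rev, inv_inv, cs.inv_simple, hts]
        have : v * cs.simple j * (cs.simple j * cs.simple j) * v⁻¹
            = v * cs.simple j * v⁻¹ := by
          rw [cs.simple_mul_simple_self, mul_one]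
        calc v * cs.simple j * cs.simple j * (cs.simple j * v⁻¹)
            = v * cs.simple j * (cs.simple j * cs.simple j) * v⁻¹ := by group
          _ = v * cs.simple j * v⁻¹ := this
      have := List.count_map_of_injective (cs.rightInvSeq d)
        (fun x : W => (cs.simple j * v⁻¹)⁻¹ * x * (cs.simple j * v⁻¹)) hinj (cs.simple j)
      rw [happ] at this
      exact this
    have hrev : (cs.rightInvSeq d.reverse).count t = (cs.rightInvSeq d).count (cs.simple j) := by
      rw [cs.rightInvSeq_reverse, List.count_reverse]
      exact count_leftInvSeq_eq cs d j t (by rw [hts, hd])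
    rw [h1, List.count_append, hmapcount, h2, List.count_cons, hrev, hts]
    simp only [beq_self_eq_true, if_true]
    push_cast
    have hc2 : ((cs.rightInvSeq d).count (cs.simple j) : ZMod 2)
        + ((cs.rightInvSeq d).count (cs.simple j) : ZMod 2) = 0 := by
      rw [← two_mul, (by decide : (2 : ZMod 2) = 0), zero_mul]
    calc ((cs.rightInvSeq d).count (cs.simple j) : ZMod 2)
          + (((cs.rightInvSeq d).count (cs.simple j) : ZMod 2) + 1)
        = (((cs.rightInvSeq d).count (cs.simple j) : ZMod 2)
          + ((cs.rightInvSeq d).count (cs.simple j) : ZMod 2)) + 1 := by ring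
      _ = 1 := by rw [hc2, zero_add]

lemma strong_exchange {ω : List B} (hω : cs.IsReduced ω) {t : W} (ht : cs.IsReflection t)
    (hlt : cs.length (cs.wordProd ω * t) < cs.length (cs.wordProd ω)) :
    t ∈ cs.rightInvSeq ω := by
  by_contra hmem
  have hcount0 : ((cs.rightInvSeq ω).count t : ZMod 2) = 0 := by
    rw [List.count_eq_zero_of_not_mem hmem]
    simp
  obtain ⟨c, hcred, hc⟩ := cs.exists_reduced_word' (cs.wordProd ω * t)
  obtain ⟨ρ, hρ, hodd⟩ := count_reflection_word_odd cs ht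
  have hprod : cs.wordProd (c ++ ρ) = cs.wordProd ω := by
    rw [cs.wordProd_append, ← hc, hρ, mul_assoc, ht.mul_self, mul_one]
  have hinv := count_parity_invariant cs hprod.symm t
  have hsplit : ((cs.rightInvSeq (c ++ ρ)).count t : ZMod 2)
      = ((cs.rightInvSeq c).count t : ZMod 2) + ((cs.rightInvSeq ρ).count t : ZMod 2) := by
    rw [rightInvSeq_append', List.count_append]
    push_cast
    congr 1
    have hinj : Function.Injective
        (fun x : W => (cs.wordProd ρ)⁻¹ * x * cs.wordProd ρ) := by
      intro x y hxy
      simp only at hxy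
      exact mul_left_cancel (mul_right_cancel hxy)
    have happ : (cs.wordProd ρ)⁻¹ * t * cs.wordProd ρ = t := by
      rw [hρ]
      group
    have := List.count_map_of_injective (cs.rightInvSeq c)
      (fun x : W => (cs.wordProd ρ)⁻¹ * x * cs.wordProd ρ) hinj t
    rw [happ] at this
    rw [this]
  rw [hcount0, hsplit, hodd] at hinv
  have hc1 : ((cs.rightInvSeq c).count t : ZMod 2) = 1 := by
    have h := hinv.symm
    have h2 := eq_neg_of_add_eq_zero_left h
    rw [h2]
    decide
  have hmemc : t ∈ cs.rightInvSeq c := by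
    by_contra hmc
    rw [List.count_eq_zero_of_not_mem hmc] at hc1
    simp at hc1
  have hinvc := cs.isRightInversion_of_mem_rightInvSeq hcred hmemc
  have : cs.length (cs.wordProd c * t) < cs.length (cs.wordProd c) := hinvc.2
  rw [← hc, mul_assoc, ht.mul_self, mul_one] at this
  omega

lemma exchange_aux {ω : List B} (hω : cs.IsReduced ω) {t : W} (ht : cs.IsReflection t)
    (hlt : cs.length (cs.wordProd ω * t) < cs.length (cs.wordProd ω)) :
    ∃ k, cs.wordProd ω * t = cs.wordProd (ω.eraseIdx k) := by
  have hmem := strong_exchange cs hω ht hlt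
  obtain ⟨k, hk, hget⟩ := List.mem_iff_getElem.mp hmem
  refine ⟨k, ?_⟩
  rw [← cs.wordProd_mul_getD_rightInvSeq ω k]
  congr 1
  rw [← hget, List.getD_eq_getElem]

/-! ### The lifting lemma -/

lemma lift_aux {n : ℕ}
    (H : ∀ c : List B, c.length < n → cs.IsReduced c → ∀ c' : List B, c'.Sublist c →
      bruhatLE cs (cs.wordProd c') (cs.wordProd c))
    (i : B) {u w : W} (huw : bruhatLE cs u w) (hw : cs.length w < n) :
    bruhatLE cs (cs.simple i * u) (cs.simple i * w)
      ∨ bruhatLE cs (cs.simple i * u) w := by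
  induction huw using Relation.ReflTransGen.head_induction_on with
  | refl => exact Or.inl (bruhatLE_refl cs _)
  | head hstep hvw ih =>
    rename_i a v
    obtain ⟨t, ht, rfl, hlen⟩ := hstep
    have hvle : cs.length (a * t) ≤ cs.length w := length_le_of_bruhatLE cs hvw
    rcases cs.length_simple_mul a i with hup | hdown
    case inr =>
      -- ℓ(sᵢa) < ℓ(a) : go down then up
      right
      have h1 : bruhatLE cs (cs.simple i * a) a := bruhatLE_of_smul_lt cs i (by omega)
      have h2 : bruhatLE cs a w :=
        Relation.ReflTransGen.head ⟨t, ht, rfl, hlen⟩ hvw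
      exact bruhatLE_trans cs h1 h2
    case inl =>
      rcases cs.length_simple_mul (a * t) i with hup2 | hdown2
      · -- both go up: single step sᵢa < sᵢ(at)
        have he : cs.simple i * (a * t) = (cs.simple i * a) * t := by rw [mul_assoc]
        rw [he] at hup2
        have hstep2 : bruhatLE cs (cs.simple i * a) (cs.simple i * (a * t)) := by
          rw [he]
          exact bruhatLE_step_up cs ht (by omega)
        rcases ih with h | h
        · exact Or.inl (bruhatLE_trans cs hstep2 h)
        · exact Or.inr (bruhatLE_trans cs hstep2 h)
      · -- sᵢ(at) < (at) : strong exchange on a reduced word of (at) starting with i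
        obtain ⟨c', hc'red, hc'⟩ := cs.exists_reduced_word' (cs.simple i * (a * t))
        have hlc' : c'.length + 1 = cs.length (a * t) := by
          have : cs.length (cs.wordProd c') = c'.length := hc'red
          rw [← hc'] at this
          omega
        have hπ : cs.wordProd (i :: c') = a * t := by
          rw [cs.wordProd_cons, ← hc', cs.simple_mul_simple_cancel_left]
        have hred : cs.IsReduced (i :: c') := by
          show cs.length (cs.wordProd (i :: c')) = (i :: c').length
          rw [hπ, List.length_cons]
          omega
        have hlt : cs.length (cs.wordProd (i :: c') * t) < cs.length (cs.wordProd (i :: c')) := by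
          rw [hπ, mul_assoc, ht.mul_self, mul_one]
          exact hlen
        obtain ⟨k, hkeq⟩ := exchange_aux cs hred ht hlt
        rw [hπ, mul_assoc, ht.mul_self, mul_one] at hkeq
        -- hkeq : a = π ((i :: c').eraseIdx k)
        match k with
        | 0 =>
          have h0 : a = cs.wordProd c' := hkeq
          have hsa : cs.simple i * a = cs.simple i * cs.wordProd c' := by rw [← h0]
          rw [← hc', cs.simple_mul_simple_cancel_left] at hsa
          exact Or.inr (by rw [hsa]; exact hvw)
        | (k + 1) =>
          have herase : (i :: c').eraseIdx (k + 1) = i :: c'.eraseIdx k := rfl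
          rw [herase, cs.wordProd_cons] at hkeq
          have hsa : cs.simple i * a = cs.wordProd (c'.eraseIdx k) := by
            rw [hkeq, cs.simple_mul_simple_cancel_left]
          have hsub : (c'.eraseIdx k).Sublist c' := List.eraseIdx_sublist c' k
          have hlenlt : c'.length < n := by omega
          have hle : bruhatLE cs (cs.simple i * a) (cs.simple i * (a * t)) := by
            rw [hsa, hc']
            exact H c' hlenlt hc'red _ hsub
          rcases ih with h | h
          · exact Or.inl (bruhatLE_trans cs hle h)
          · exact Or.inr (bruhatLE_trans cs hle h)

/-! ### The main induction -/

lemma subword_aux (n : ℕ) : ∀ l : List B, l.length ≤ n → cs.IsReduced l →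
    ∀ l' : List B, l'.Sublist l → bruhatLE cs (cs.wordProd l') (cs.wordProd l) := by
  induction n with
  | zero =>
    intro l hlen _ l' hsub
    have hl : l = [] := List.length_eq_zero_iff.mp (Nat.le_zero.mp hlen)
    subst hl
    have hl' : l' = [] := List.sublist_nil.mp hsub
    subst hl'
    exact bruhatLE_refl cs _
  | succ n ihn =>
    intro l hlen hred l' hsub
    cases l with
    | nil =>
      have hl' : l' = [] := List.sublist_nil.mp hsub
      subst hl'
      exact bruhatLE_refl cs _
    | cons i l₁ =>
      have hlred : cs.length (cs.wordProd (i :: l₁)) = l₁.length + 1 := hred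
      have hπ : cs.wordProd (i :: l₁) = cs.simple i * cs.wordProd l₁ := cs.wordProd_cons i l₁
      have hl1le : cs.length (cs.wordProd l₁) ≤ l₁.length := cs.length_wordProd_le l₁
      have hsile : cs.length (cs.simple i * cs.wordProd l₁) ≤ cs.length (cs.wordProd l₁) + 1 := by
        rcases cs.length_simple_mul (cs.wordProd l₁) i with h | h <;> omega
      have hl1red : cs.IsReduced l₁ := by
        show cs.length (cs.wordProd l₁) = l₁.length
        rw [hπ] at hlred
        omega
      have hlt1 : cs.length (cs.wordProd l₁) < cs.length (cs.simple i * cs.wordProd l₁) := by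
        rw [hπ] at hlred
        omega
      have hstep : bruhatLE cs (cs.wordProd l₁) (cs.wordProd (i :: l₁)) := by
        rw [hπ]
        exact bruhatLE_smul_of_lt cs i hlt1
      have hl1n : l₁.length ≤ n := by
        simp only [List.length_cons] at hlen
        omega
      cases hsub with
      | cons _ h =>
        exact bruhatLE_trans cs (ihn l₁ hl1n hl1red l' h) hstep
      | cons_cons _ h =>
        rename_i l₂
        have hle := ihn l₁ hl1n hl1red l₂ h
        have H : ∀ c : List B, c.length < n + 1 → cs.IsReduced c →
            ∀ c' : List B, c'.Sublist c → bruhatLE cs (cs.wordProd c') (cs.wordProd c) :=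
          fun c hc => ihn c (Nat.lt_succ_iff.mp hc)
        have hw : cs.length (cs.wordProd l₁) < n + 1 := by omega
        rcases lift_aux cs H i hle hw with h1 | h1
        · rw [cs.wordProd_cons, cs.wordProd_cons]
          exact h1
        · rw [cs.wordProd_cons]
          exact bruhatLE_trans cs h1 hstep

end SubwordAux

/-- If `x` is a subword of a reduced word for `w`, then the element
expressed by `x` is `≤ w` in the Bruhat order. -/
theorem subword_le_bruhat {B : Type*} {M : CoxeterMatrix B} {W : Type*} [Group W]
    (cs : CoxeterSystem M W)
    (l : List B) (hl : cs.IsReduced l)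
    (l' : List B) (hsub : l'.Sublist l) :
    bruhatLE cs (cs.wordProd l') (cs.wordProd l) := by
  letI : DecidableEq W := Classical.decEq W
  exact SubwordAux.subword_aux cs l.length l le_rfl hl l' hsub
end
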